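/- Let e ≥ 2 and let λ ⊆ ν be partitions. If the skew shape ν/λ admits two tilings by e-ribbons (each tiling given by a chain of partitions from λ to ν in which consecutive terms differ by an e-ribbon), then the total spins of the two tilings — the sums of the spins of their ribbons — are congruent modulo 2. (Well-definedness of the sign (−1)^{spin} attached to ribbon tilings, used in the definition of the operators V_k and in the sign ε of the Farahat character in Section 6.) -/

import Mathlib

/-- Two cells of a Young diagram are edge-adjacent. -/
def CellAdj (a b : ℕ × ℕ) : Prop :=
  (a.1 = b.1 ∧ (a.2 + 1 = b.2 ∨ b.2 + 1 = a.2)) ∨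
  (a.2 = b.2 ∧ (a.1 + 1 = b.1 ∨ b.1 + 1 = a.1))

/-- A finite set of cells is edgewise connected. -/
def ConnectedCells (s : Finset (ℕ × ℕ)) : Prop :=
  ∀ a ∈ s, ∀ b ∈ s,
    Relation.ReflTransGen (fun x y => x ∈ s ∧ y ∈ s ∧ CellAdj x y) a b

/-- A finite set of cells is an `e`-ribbon shape: it has exactly `e` cells, it is
edgewise connected, and it contains no 2 × 2 block of cells. -/
def IsRibbonShape (e : ℕ) (s : Finset (ℕ × ℕ)) : Prop :=
  s.card = e ∧ ConnectedCells s ∧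
    ¬ ∃ i j : ℕ, (i, j) ∈ s ∧ (i + 1, j) ∈ s ∧ (i, j + 1) ∈ s ∧ (i + 1, j + 1) ∈ s

/-- `RibbonStep e μ ν` : `μ ⊆ ν` and the skew shape `ν / μ` is an `e`-ribbon,
i.e. `μ` is obtained from `ν` by removing a single `e`-ribbon. -/
def RibbonStep (e : ℕ) (μ ν : YoungDiagram) : Prop :=
  μ ≤ ν ∧ IsRibbonShape e (ν.cells \ μ.cells)

/-- An `e`-core is a partition admitting no removable `e`-ribbon. -/
def IsECore (e : ℕ) (c : YoungDiagram) : Prop :=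
  ∀ μ : YoungDiagram, ¬ RibbonStep e μ c

/-- `IsECoreOf e λ c` : `c` is obtained from `λ` by successively removing `e`-ribbons,
and `c` admits no removable `e`-ribbon; i.e. `c` is the `e`-core of `λ`. -/
def IsECoreOf (e : ℕ) (la c : YoungDiagram) : Prop :=
  Relation.ReflTransGen (fun x y => RibbonStep e y x) la c ∧ IsECore e c

/-- `IsRibbonTiling e la nu μ k` : the chain `la = μ 0 ⊆ μ 1 ⊆ ⋯ ⊆ μ k = nu` exhibits a
tiling of the skew shape `nu / la` by `k` `e`-ribbons, the `t`-th ribbon being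
`μ (t+1) / μ t`. -/
def IsRibbonTiling (e : ℕ) (la nu : YoungDiagram) (μ : ℕ → YoungDiagram) (k : ℕ) : Prop :=
  μ 0 = la ∧ μ k = nu ∧ ∀ t, t < k → RibbonStep e (μ t) (μ (t + 1))

/-- The `t`-th ribbon of a tiling given by a chain `μ`. -/
def ribbonOf (μ : ℕ → YoungDiagram) (t : ℕ) : Finset (ℕ × ℕ) :=
  (μ (t + 1)).cells \ (μ t).cells

/-- `c` is the head (top-rightmost cell) of the ribbon `s` : `c` lies in the rightmost
column of `s`, topmost within that column. -/
def IsHead (s : Finset (ℕ × ℕ)) (c : ℕ × ℕ) : Prop :=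
  c ∈ s ∧ (∀ d ∈ s, d.2 ≤ c.2) ∧ ∀ d ∈ s, d.2 = c.2 → c.1 ≤ d.1

/-- The ribbon `s` is horizontal relative to `nu` : the cell immediately above its
top-rightmost cell does not belong to the Young diagram of `nu`. -/
def HorizontalRibbon (nu : YoungDiagram) (s : Finset (ℕ × ℕ)) : Prop :=
  ∀ c : ℕ × ℕ, IsHead s c → ∀ i : ℕ, c.1 = i + 1 → (i, c.2) ∉ nu

/-- A horizontal `e`-ribbon strip tiling of `nu / la` of weight `k`. -/
def IsHorizontalStrip (e : ℕ) (la nu : YoungDiagram) (μ : ℕ → YoungDiagram) (k : ℕ) : Prop :=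
  IsRibbonTiling e la nu μ k ∧ ∀ t, t < k → HorizontalRibbon nu (ribbonOf μ t)

/-- The spin of a ribbon: its number of nonempty rows minus 1. -/
def ribbonSpin (s : Finset (ℕ × ℕ)) : ℕ :=
  (s.image Prod.fst).card - 1

namespace SpinHelper

/-- The residue-inversion statistic of a bead sequence. -/
def F (e N : ℕ) (b : ℕ → ℕ) : ℕ :=
  ∑ j ∈ Finset.range N, ∑ i ∈ Finset.range j, (if b i % e < b j % e then 1 else 0)

lemma F_congr (e N : ℕ) (b c : ℕ → ℕ) (h : ∀ i, i < N → b i % e = c i % e) :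
    F e N b = F e N c := by
  unfold F
  refine Finset.sum_congr rfl fun j hj => Finset.sum_congr rfl fun i hi => ?_
  rw [Finset.mem_range] at hj hi
  rw [h i (by omega), h j hj]

lemma F_swap (e N : ℕ) (b : ℕ → ℕ) (i : ℕ) (hi : i + 1 < N)
    (hne : b i % e ≠ b (i + 1) % e) :
    F e N (b ∘ Equiv.swap i (i + 1)) % 2 = (F e N b + 1) % 2 := by
  set b' : ℕ → ℕ := b ∘ Equiv.swap i (i + 1) with hb'
  have hb'i : b' i = b (i + 1) := by simp [hb', Equiv.swap_apply_left]
  have hb'i1 : b' (i + 1) = b i := by simp [hb', Equiv.swap_apply_right]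
  have hb'other : ∀ t, t ≠ i → t ≠ i + 1 → b' t = b t := by
    intro t h1 h2
    simp [hb', Equiv.swap_apply_of_ne_of_ne h1 h2]
  set S : (ℕ → ℕ) → ℕ → ℕ :=
    fun c j => ∑ p ∈ Finset.range j, (if c p % e < c j % e then 1 else 0) with hS
  -- inner sums agree away from i, i+1
  have hinner : ∀ j, j ≠ i → j ≠ i + 1 → S b' j = S b j := by
    intro j h1 h2
    rcases lt_or_ge j (i + 1) with hj | hj
    · -- j ≤ i, all indices unmoved
      refine Finset.sum_congr rfl fun p hp => ?_
      rw [Finset.mem_range] at hp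
      rw [hb'other p (by omega) (by omega), hb'other j h1 h2]
    · -- j > i+1
      have hj' : i + 1 < j := by omega
      rw [hS]
      simp only
      rw [hb'other j h1 h2]
      refine Finset.sum_equiv (Equiv.swap i (i + 1)) ?_ ?_
      · intro p
        simp only [Finset.mem_range]
        rcases eq_or_ne p i with rfl | hpi
        · rw [Equiv.swap_apply_left]; omega
        rcases eq_or_ne p (i + 1) with rfl | hpi1
        · rw [Equiv.swap_apply_right]; omega
        · rw [Equiv.swap_apply_of_ne_of_ne hpi hpi1]
      · intro p _
        rfl
  have hkey : S b' i + S b' (i + 1) + (if b i % e < b (i + 1) % e then 1 else 0)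
      = S b i + S b (i + 1) + (if b (i + 1) % e < b i % e then 1 else 0) := by
    have e1 : S b' i = ∑ p ∈ Finset.range i, (if b p % e < b (i + 1) % e then 1 else 0) := by
      refine Finset.sum_congr rfl fun p hp => ?_
      rw [Finset.mem_range] at hp
      rw [hb'other p (by omega) (by omega), hb'i]
    have e2 : S b' (i + 1)
        = (∑ p ∈ Finset.range i, (if b p % e < b i % e then 1 else 0))
          + (if b (i + 1) % e < b i % e then 1 else 0) := by
      rw [hS]
      simp only
      rw [Finset.sum_range_succ, hb'i, hb'i1]
      congr 1
      refine Finset.sum_congr rfl fun p hp => ?_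
      rw [Finset.mem_range] at hp
      rw [hb'other p (by omega) (by omega)]
    have e3 : S b (i + 1)
        = (∑ p ∈ Finset.range i, (if b p % e < b (i + 1) % e then 1 else 0))
          + (if b i % e < b (i + 1) % e then 1 else 0) := by
      rw [hS]; simp only [Finset.sum_range_succ]
    have e4 : S b i = ∑ p ∈ Finset.range i, (if b p % e < b i % e then 1 else 0) := rfl
    rw [e1, e2, e3, e4]
    omega
  -- assemble
  have hsplit : ∀ c : ℕ → ℕ, F e N c
      = S c i + S c (i + 1) + ∑ j ∈ ((Finset.range N).erase i).erase (i + 1), S c j := by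
    intro c
    have h1 : i + 1 ∈ (Finset.range N).erase i := by
      rw [Finset.mem_erase, Finset.mem_range]; omega
    have h2 : i ∈ Finset.range N := by rw [Finset.mem_range]; omega
    have h3 := Finset.add_sum_erase _ (S c) h2
    have h4 := Finset.add_sum_erase _ (S c) h1
    have h5 : F e N c = ∑ j ∈ Finset.range N, S c j := rfl
    omega
  have hrest : ∑ j ∈ ((Finset.range N).erase i).erase (i + 1), S b' j
      = ∑ j ∈ ((Finset.range N).erase i).erase (i + 1), S b j := by
    refine Finset.sum_congr rfl fun j hj => ?_
    rw [Finset.mem_erase, Finset.mem_erase] at hj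
    exact hinner j hj.2.1 hj.1
  have hone : (if b i % e < b (i + 1) % e then 1 else 0)
      + (if b (i + 1) % e < b i % e then 1 else 0) = 1 := by
    rcases lt_or_gt_of_ne hne with h | h
    · rw [if_pos h, if_neg (by omega)]
    · rw [if_neg (by omega), if_pos h]
  rw [hsplit b', hsplit b, hrest] at *
  omega

lemma F_move (e N : ℕ) (b : ℕ → ℕ) (r d : ℕ) (h : r + d < N)
    (hres : ∀ m, r < m → m ≤ r + d → b m % e ≠ b r % e) :
    ∃ c : ℕ → ℕ, (∀ i, i < r → c i = b i) ∧ (∀ i, r ≤ i → i < r + d → c i = b (i + 1)) ∧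
      c (r + d) = b r ∧ (∀ i, r + d < i → c i = b i) ∧
      F e N c % 2 = (F e N b + d) % 2 := by
  induction d with
  | zero =>
    exact ⟨b, fun i _ => rfl, fun i h1 h2 => by omega, rfl, fun i _ => rfl, rfl⟩
  | succ d ih =>
    obtain ⟨c, h1, h2, h3, h4, h5⟩ := ih (by omega) (fun m hm hm2 => hres m hm (by omega))
    have hc1 : c (r + d + 1) = b (r + d + 1) := h4 _ (by omega)
    have hne : c (r + d) % e ≠ c (r + d + 1) % e := by
      rw [h3, hc1]
      exact fun hh => hres (r + d + 1) (by omega) (by omega) hh.symm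
    refine ⟨c ∘ Equiv.swap (r + d) (r + d + 1), ?_, ?_, ?_, ?_, ?_⟩
    · intro i hir
      simp only [Function.comp_apply,
        Equiv.swap_apply_of_ne_of_ne (by omega : i ≠ r + d) (by omega : i ≠ r + d + 1)]
      exact h1 i hir
    · intro i hri hi
      rcases eq_or_ne i (r + d) with rfl | hne2
      · simp only [Function.comp_apply, Equiv.swap_apply_left]
        exact hc1
      · simp only [Function.comp_apply,
          Equiv.swap_apply_of_ne_of_ne hne2 (by omega : i ≠ r + d + 1)]
        exact h2 i hri (by omega)
    · show c ((Equiv.swap (r + d) (r + d + 1)) (r + d + 1)) = b r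
      simp only [Equiv.swap_apply_right]
      exact h3
    · intro i hi
      simp only [Function.comp_apply,
        Equiv.swap_apply_of_ne_of_ne (by omega : i ≠ r + d) (by omega : i ≠ r + d + 1)]
      exact h4 i (by omega)
    · have := F_swap e N c (r + d) (by omega) hne
      omega


lemma rowLen_mono {μ ν : YoungDiagram} (h : μ ≤ ν) (i : ℕ) :
    μ.rowLen i ≤ ν.rowLen i := by
  by_contra hc
  push_neg at hc
  have h1 : (i, ν.rowLen i) ∈ μ := YoungDiagram.mem_iff_lt_rowLen.mpr hc
  have h2 : (i, ν.rowLen i) ∈ ν := h h1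
  rw [YoungDiagram.mem_iff_lt_rowLen] at h2; omega

lemma cross_of_path {s : Finset (ℕ × ℕ)} {a b : ℕ × ℕ}
    (h : Relation.ReflTransGen (fun x y => x ∈ s ∧ y ∈ s ∧ CellAdj x y) a b) :
    ∀ i, a.1 ≤ i → i < b.1 → ∃ j, (i, j) ∈ s ∧ (i + 1, j) ∈ s := by
  induction h with
  | refl => intro i h1 h2; omega
  | tail hp hstep ih =>
    rename_i c d
    intro i h1 h2
    obtain ⟨hcs, hds, hadj⟩ := hstep
    by_cases hic : i < c.1
    · exact ih i h1 hic
    · rcases hadj with ⟨g1, g2⟩ | ⟨g1, g2⟩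
      · omega
      · rcases g2 with g2 | g2
        · have hi : i = c.1 := by omega
          refine ⟨c.2, ?_, ?_⟩
          · rwa [hi, Prod.mk.eta]
          · have : (i + 1, c.2) = d := by
              rw [Prod.ext_iff]; exact ⟨by omega, g1⟩
            rwa [this]
        · omega

lemma ribbon_structure {e : ℕ} (he : 1 ≤ e) {μ ν : YoungDiagram} (h : RibbonStep e μ ν) :
    ∃ r r' : ℕ, r ≤ r' ∧
      (∀ i, i < r → μ.rowLen i = ν.rowLen i) ∧
      (∀ i, r' < i → μ.rowLen i = ν.rowLen i) ∧
      (∀ i, r ≤ i → i < r' → ν.rowLen (i + 1) = μ.rowLen i + 1) ∧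
      (μ.rowLen r' < ν.rowLen r') ∧
      (μ.rowLen r < ν.rowLen r) ∧
      (e + μ.rowLen r' + r = ν.rowLen r + r') ∧
      ribbonSpin (ν.cells \ μ.cells) = r' - r := by
  obtain ⟨hle, hcard, hconn, h2x2⟩ := h
  set s : Finset (ℕ × ℕ) := ν.cells \ μ.cells with hs
  have mem_s : ∀ c : ℕ × ℕ, c ∈ s ↔ c ∈ ν ∧ c ∉ μ := by
    intro c; rw [hs, Finset.mem_sdiff, YoungDiagram.mem_cells, YoungDiagram.mem_cells]
  have mem_s' : ∀ i j : ℕ, (i, j) ∈ s ↔ μ.rowLen i ≤ j ∧ j < ν.rowLen i := by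
    intro i j
    rw [mem_s, YoungDiagram.mem_iff_lt_rowLen, YoungDiagram.mem_iff_lt_rowLen]
    omega
  have hsne : s.Nonempty := by
    rw [← Finset.card_pos, hcard]; omega
  have hRne : (s.image Prod.fst).Nonempty := hsne.image _
  set r : ℕ := (s.image Prod.fst).min' hRne with hr
  set r' : ℕ := (s.image Prod.fst).max' hRne with hr'
  have mem_R : ∀ i : ℕ, i ∈ s.image Prod.fst ↔ μ.rowLen i < ν.rowLen i := by
    intro i
    constructor
    · intro hi
      obtain ⟨⟨i', j⟩, hij, rfl⟩ := Finset.mem_image.mp hi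
      rw [mem_s'] at hij
      show μ.rowLen i' < ν.rowLen i'
      omega
    · intro hi
      exact Finset.mem_image.mpr ⟨(i, μ.rowLen i), (mem_s' i _).mpr ⟨le_refl _, hi⟩, rfl⟩
  have hrr' : r ≤ r' := Finset.min'_le _ _ (Finset.max'_mem _ _)
  have hout : ∀ i, (i < r ∨ r' < i) → μ.rowLen i = ν.rowLen i := by
    intro i hi
    have : i ∉ s.image Prod.fst := by
      intro hmem
      rcases hi with hi | hi
      · exact absurd (Finset.min'_le _ _ hmem) (by omega)
      · exact absurd (Finset.le_max' _ _ hmem) (by omega)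
    rw [mem_R] at this
    have := rowLen_mono hle i
    omega
  -- crossing: for r ≤ i < r'
  have hrmem : μ.rowLen r < ν.rowLen r := (mem_R r).mp (Finset.min'_mem _ _)
  have hr'mem : μ.rowLen r' < ν.rowLen r' := (mem_R r').mp (Finset.max'_mem _ _)
  have hstep : ∀ i, r ≤ i → i < r' → ν.rowLen (i + 1) = μ.rowLen i + 1 := by
    intro i hi1 hi2
    have ha : ((r : ℕ), μ.rowLen r) ∈ s := (mem_s' _ _).mpr ⟨le_refl _, hrmem⟩
    have hb : ((r' : ℕ), μ.rowLen r') ∈ s := (mem_s' _ _).mpr ⟨le_refl _, hr'mem⟩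
    obtain ⟨j, hj1, hj2⟩ := cross_of_path (hconn _ ha _ hb) i hi1 hi2
    rw [mem_s'] at hj1 hj2
    -- gives ν.rowLen (i+1) ≥ μ.rowLen i + 1
    have hge : μ.rowLen i < ν.rowLen (i + 1) := by omega
    -- no 2x2 gives ≤
    by_contra hcon
    have hgt : μ.rowLen i + 2 ≤ ν.rowLen (i + 1) := by omega
    apply h2x2
    refine ⟨i, μ.rowLen i, ?_, ?_, ?_, ?_⟩ <;> rw [mem_s']
    · have := ν.rowLen_anti i (i + 1) (by omega)
      omega
    · have := μ.rowLen_anti i (i + 1) (by omega)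
      omega
    · have := ν.rowLen_anti i (i + 1) (by omega)
      omega
    · have := μ.rowLen_anti i (i + 1) (by omega)
      omega
  have hint : ∀ i, r ≤ i → i ≤ r' → μ.rowLen i < ν.rowLen i := by
    intro i hi1 hi2
    rcases eq_or_lt_of_le hi1 with rfl | hlt
    · exact hrmem
    · obtain ⟨j, rfl⟩ : ∃ j, i = j + 1 := ⟨i - 1, by omega⟩
      have := hstep j (by omega) (by omega)
      have := μ.rowLen_anti j (j + 1) (by omega)
      omega
  -- image is the interval
  have himg : s.image Prod.fst = Finset.Icc r r' := by
    ext i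
    rw [Finset.mem_Icc, mem_R]
    constructor
    · intro hi
      exact ⟨Finset.min'_le _ _ ((mem_R i).mpr hi), Finset.le_max' _ _ ((mem_R i).mpr hi)⟩
    · intro ⟨h1, h2⟩
      exact hint i h1 h2
  have hspin : ribbonSpin s = r' - r := by
    rw [ribbonSpin, himg, Nat.card_Icc]
    omega
  -- cardinality computation
  have hfiber : ∀ i : ℕ, (s.filter (fun c => c.1 = i)).card = ν.rowLen i - μ.rowLen i := by
    intro i
    have : s.filter (fun c => c.1 = i)
        = (Finset.Ico (μ.rowLen i) (ν.rowLen i)).map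
            ⟨fun j => (i, j), fun a b hab => by simpa using hab⟩ := by
      ext ⟨x, y⟩
      rw [Finset.mem_filter, Finset.mem_map, mem_s']
      constructor
      · intro ⟨⟨g1, g2⟩, g3⟩
        have g3' : x = i := g3
        subst g3'
        exact ⟨y, Finset.mem_Ico.mpr ⟨g1, g2⟩, rfl⟩
      · intro ⟨j, hj, hj2⟩
        replace hj2 : i = x ∧ j = y := Prod.mk.inj hj2
        rw [Finset.mem_Ico] at hj
        obtain ⟨rfl, rfl⟩ := hj2
        exact ⟨⟨hj.1, hj.2⟩, rfl⟩
    rw [this, Finset.card_map, Nat.card_Ico]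
  have hcards : e = ∑ i ∈ Finset.Icc r r', (ν.rowLen i - μ.rowLen i) := by
    rw [← hcard]
    rw [Finset.card_eq_sum_card_fiberwise (f := Prod.fst) (t := Finset.Icc r r')
      (fun c hc => by rw [← himg]; exact Finset.mem_image_of_mem _ hc)]
    exact Finset.sum_congr rfl fun i _ => hfiber i
  -- telescoping
  have htel : ∀ d : ℕ, r + d ≤ r' →
      (∑ i ∈ Finset.Icc r (r + d), (ν.rowLen i - μ.rowLen i)) + μ.rowLen (r + d)
        = ν.rowLen r + d := by
    intro d
    induction d with
    | zero =>
      intro _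
      simp only [Nat.add_zero, Finset.Icc_self, Finset.sum_singleton]
      omega
    | succ d ih =>
      intro hd
      have ih' := ih (by omega)
      have hstep' := hstep (r + d) (by omega) (by omega)
      have hint' := hint (r + d + 1) (by omega) (by omega)
      rw [show r + (d + 1) = (r + d) + 1 by omega,
        Finset.sum_Icc_succ_top (by omega : r ≤ r + d + 1)]
      omega
  have htel' := htel (r' - r) (by omega)
  rw [show r + (r' - r) = r' by omega] at htel'
  rw [← hcards] at htel'
  exact ⟨r, r', hrr', fun i hi => hout i (Or.inl hi), fun i hi => hout i (Or.inr hi),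
    hstep, hr'mem, hrmem, by omega, hspin⟩

/-- bead sequence -/
def bseq (N : ℕ) (π : YoungDiagram) (i : ℕ) : ℕ := π.rowLen i + (N - i)

lemma step_parity {e N : ℕ} (he : 1 ≤ e) {μ ν : YoungDiagram} (h : RibbonStep e μ ν)
    (hN : ∀ c : ℕ × ℕ, c ∈ ν → c.1 < N) :
    F e N (bseq N ν) % 2 = (F e N (bseq N μ) + ribbonSpin (ν.cells \ μ.cells)) % 2 := by
  obtain ⟨r, r', hrr', hlow, hhigh, hmid, hr', hr, hcardeq, hspin⟩ := ribbon_structure he h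
  have hr'N : r' < N := by
    have : ((r' : ℕ), μ.rowLen r') ∈ ν := YoungDiagram.mem_iff_lt_rowLen.mpr hr'
    exact hN _ this
  -- nu's rowLen is antitone
  have hanti : ∀ i j : ℕ, i ≤ j → ν.rowLen j ≤ ν.rowLen i := fun i j hij => ν.rowLen_anti i j hij
  have hμanti : ∀ i j : ℕ, i ≤ j → μ.rowLen j ≤ μ.rowLen i := fun i j hij => μ.rowLen_anti i j hij
  -- residues distinct for beads strictly between
  have hres : ∀ m, r < m → m ≤ r + (r' - r) → bseq N ν m % e ≠ bseq N ν r % e := by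
    intro m hm1 hm2 heq
    have hm2' : m ≤ r' := by omega
    have h1 : bseq N ν m < bseq N ν r := by
      have := hanti r m (by omega)
      unfold bseq; omega
    have h2 : bseq N ν r < bseq N ν m + e := by
      have g1 := hanti m r' hm2'
      unfold bseq
      omega
    have hz : (bseq N ν r - bseq N ν m) % e = 0 :=
      Nat.sub_mod_eq_zero_of_mod_eq heq.symm
    rw [Nat.mod_eq_of_lt (by omega)] at hz
    omega
  obtain ⟨c, hc1, hc2, hc3, hc4, hc5⟩ := F_move e N (bseq N ν) r (r' - r) (by omega) hres
  rw [show r + (r' - r) = r' by omega] at hc3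
  have hcongr : F e N (bseq N μ) = F e N c := by
    apply F_congr
    intro i hiN
    rcases lt_or_ge i r with hir | hir
    · rw [hc1 i hir]
      unfold bseq
      rw [hlow i hir]
    · rcases lt_or_ge i r' with hir' | hir'
      · rw [hc2 i hir (by omega)]
        unfold bseq
        have := hmid i hir hir'
        have : μ.rowLen i + (N - i) = ν.rowLen (i + 1) + (N - (i + 1)) := by omega
        rw [this]
      · rcases eq_or_lt_of_le hir' with heq | hgt
        · rw [← heq, hc3]
          have hbead : bseq N ν r = bseq N μ r' + e := by
            unfold bseq; omega
          rw [hbead, Nat.add_mod_right]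
        · rw [hc4 i (by omega)]
          unfold bseq
          rw [hhigh i hgt]
  omega

lemma chain_parity {e N : ℕ} (he : 1 ≤ e) (la : YoungDiagram) (μ : ℕ → YoungDiagram)
    (k : ℕ) (nu : YoungDiagram) (h : IsRibbonTiling e la nu μ k)
    (hN : ∀ c : ℕ × ℕ, c ∈ nu → c.1 < N) :
    F e N (bseq N nu) % 2
      = (F e N (bseq N la) + ∑ t ∈ Finset.range k, ribbonSpin (ribbonOf μ t)) % 2 := by
  induction k generalizing nu with
  | zero =>
    obtain ⟨h0, hk, _⟩ := h
    rw [← hk, h0]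
    simp
  | succ k ih =>
    obtain ⟨h0, hk, hsteps⟩ := h
    have hstep : RibbonStep e (μ k) nu := by
      rw [← hk]; exact hsteps k (by omega)
    have hsub : μ k ≤ nu := hstep.1
    have hN' : ∀ c : ℕ × ℕ, c ∈ μ k → c.1 < N := fun c hc => hN c (hsub hc)
    have ihres := ih (μ k) ⟨h0, rfl, fun t ht => hsteps t (by omega)⟩ hN'
    have hsp := step_parity he hstep hN
    have hrib : ribbonOf μ k = nu.cells \ (μ k).cells := by
      rw [ribbonOf, hk]
    rw [Finset.sum_range_succ, hrib]
    omega

end SpinHelper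

/-- **Well-definedness of the sign `(−1)^spin` of a ribbon tiling.** If the skew shape
`ν/λ` admits two tilings by `e`-ribbons, then the total spins of the two tilings — the
sums of the spins of their ribbons — are congruent modulo 2. -/
theorem tiling_spin_parity (e : ℕ) (he : 2 ≤ e) (la nu : YoungDiagram)
    (hsub : la ≤ nu)
    (μ ν : ℕ → YoungDiagram) (k l : ℕ)
    (hμ : IsRibbonTiling e la nu μ k) (hν : IsRibbonTiling e la nu ν l) :
    (∑ t ∈ Finset.range k, ribbonSpin (ribbonOf μ t)) % 2 =
      (∑ t ∈ Finset.range l, ribbonSpin (ribbonOf ν t)) % 2 := by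
  have he' : 1 ≤ e := by omega
  set N : ℕ := nu.cells.card + 1 with hNdef
  have hN : ∀ c : ℕ × ℕ, c ∈ nu → c.1 < N := by
    intro c hc
    have hsubset : (Finset.range (c.1 + 1)).image (fun i => ((i : ℕ), (0 : ℕ)))
        ⊆ nu.cells := by
      intro x hx
      obtain ⟨i, hi, rfl⟩ := Finset.mem_image.mp hx
      rw [Finset.mem_range] at hi
      rw [YoungDiagram.mem_cells]
      exact nu.up_left_mem (by omega) (Nat.zero_le _) hc
    have hcardle := Finset.card_le_card hsubset
    rw [Finset.card_image_of_injective _ (fun a b hab => by simpa using hab),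
      Finset.card_range] at hcardle
    omega
  have h1 := SpinHelper.chain_parity he' la μ k nu hμ hN
  have h2 := SpinHelper.chain_parity he' la ν l nu hν hN
  omega
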